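/- For any two optimal solutions q, p ∈ Q, the difference p − q belongs to S(p), and S(p) ⊆ S, where S = S(q₀) for any q₀ in the relative interior of Q. -/

import Mathlib

open Set

noncomputable section

/-- `g` is a polynomial function on `ℝⁿ`. -/
def IsPolyFun (n : ℕ) (g : (Fin n → ℝ) → ℝ) : Prop :=
  ∃ P : MvPolynomial (Fin n) ℝ, ∀ x, g x = MvPolynomial.eval x P

/-- The uniform deviation `‖f − q‖_∞ = max_{x ∈ X} |f x − q x|`. -/
def dev {n : ℕ} (X : Set (Fin n → ℝ)) (f q : (Fin n → ℝ) → ℝ) : ℝ :=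
  sSup ((fun x => |f x - q x|) '' X)

/-- The solution set `Q` of the Chebyshev approximation problem for `f` on `X` over `V`. -/
def solSet {n : ℕ} (V : Submodule ℝ ((Fin n → ℝ) → ℝ)) (X : Set (Fin n → ℝ))
    (f : (Fin n → ℝ) → ℝ) : Set ((Fin n → ℝ) → ℝ) :=
  {q | q ∈ V ∧ ∀ p ∈ V, dev X f q ≤ dev X f p}

/-- `N(q)`: points of minimal deviation. -/
def Nset {n : ℕ} (X : Set (Fin n → ℝ)) (f q : (Fin n → ℝ) → ℝ) : Set (Fin n → ℝ) :=
  {x ∈ X | q x - f x = dev X f q}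

/-- `P(q)`: points of maximal deviation. -/
def Pset {n : ℕ} (X : Set (Fin n → ℝ)) (f q : (Fin n → ℝ) → ℝ) : Set (Fin n → ℝ) :=
  {x ∈ X | f x - q x = dev X f q}

/-- `S(q)`: the set of polynomials in `V` separating `P(q)` and `N(q)`. -/
def sepSet {n : ℕ} (V : Submodule ℝ ((Fin n → ℝ) → ℝ)) (X : Set (Fin n → ℝ))
    (f q : (Fin n → ℝ) → ℝ) : Set ((Fin n → ℝ) → ℝ) :=
  {s | s ∈ V ∧ ∀ x ∈ Pset X f q, ∀ y ∈ Nset X f q, s x * s y ≤ 0}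

/-- A point of the intrinsic interior of `Q` can be pushed past any point of `Q`. -/
lemma exists_forward {E : Type*} [AddCommGroup E] [Module ℝ E] [TopologicalSpace E]
    [IsTopologicalAddGroup E] [ContinuousSMul ℝ E] {Q : Set E} {q₀ p : E}
    (hq₀ : q₀ ∈ intrinsicInterior ℝ Q) (hp : p ∈ Q) :
    ∃ t : ℝ, 0 < t ∧ q₀ + t • (q₀ - p) ∈ Q := by
  obtain ⟨y, hy, rfl⟩ := hq₀
  have hpspan : p ∈ affineSpan ℝ Q := subset_affineSpan ℝ Q hp
  have hmem : ∀ t : ℝ, (t • ((y : E) - p) + (y : E)) ∈ affineSpan ℝ Q := fun t => by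
    simpa using AffineSubspace.smul_vsub_vadd_mem (affineSpan ℝ Q) t y.2 hpspan y.2
  set c : ℝ → affineSpan ℝ Q := fun t => ⟨t • ((y : E) - p) + y, hmem t⟩ with hcdef
  have hcont : Continuous c :=
    Continuous.subtype_mk ((continuous_id.smul continuous_const).add continuous_const) _
  have hc0 : c 0 = y := Subtype.ext (by simp [hcdef])
  have hev : ∀ᶠ t in nhds (0 : ℝ), c t ∈ interior (((↑) : affineSpan ℝ Q → E) ⁻¹' Q) := by
    have h := hcont.continuousAt (x := (0 : ℝ))
    rw [ContinuousAt, hc0] at h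
    exact h.eventually (isOpen_interior.eventually_mem hy)
  obtain ⟨ε, hε, hball⟩ := Metric.eventually_nhds_iff.mp hev
  have hmemQ : c (ε / 2) ∈ interior (((↑) : affineSpan ℝ Q → E) ⁻¹' Q) := by
    apply hball
    rw [Real.dist_eq]
    rw [abs_of_pos (by linarith)]
    linarith
  refine ⟨ε / 2, by linarith, ?_⟩
  have h' : c (ε / 2) ∈ ((↑) : affineSpan ℝ Q → E) ⁻¹' Q := interior_subset hmemQ
  simpa [hcdef, add_comm] using h'

/-- For any two optimal solutions `q, p ∈ Q`, the difference `p − q` belongs to `S(p)`, and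
`S(p) ⊆ S`, where `S = S(q₀)` for any `q₀` in the relative interior of `Q`. -/
theorem stmt5 (n : ℕ) (X : Set (Fin n → ℝ)) (hX : X.Nonempty) (hXc : IsCompact X)
    (f : (Fin n → ℝ) → ℝ) (hf : ContinuousOn f X)
    (V : Submodule ℝ ((Fin n → ℝ) → ℝ)) (hVpoly : ∀ g ∈ V, IsPolyFun n g)
    (hVfd : FiniteDimensional ℝ ↥V)
    (q₀ : (Fin n → ℝ) → ℝ) (hq₀ : q₀ ∈ intrinsicInterior ℝ (solSet V X f)) :
    ∀ q ∈ solSet V X f, ∀ p ∈ solSet V X f,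
      (p - q) ∈ sepSet V X f p ∧ sepSet V X f p ⊆ sepSet V X f q₀ := by
  have contV : ∀ g ∈ V, Continuous g := by
    intro g hg
    obtain ⟨P, hP⟩ := hVpoly g hg
    have : g = fun x => MvPolynomial.eval x P := funext hP
    rw [this]; exact MvPolynomial.continuous_eval (p := P)
  have hbound : ∀ r ∈ V, ∀ x ∈ X, |f x - r x| ≤ dev X f r := by
    intro r hr x hx
    apply le_csSup
    · exact (hXc.image_of_continuousOn ((hf.sub (contV r hr).continuousOn).abs)).bddAbove
    · exact ⟨x, hx, rfl⟩
  have hq0Q : q₀ ∈ solSet V X f := intrinsicInterior_subset hq₀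
  have hdev_eq : ∀ a ∈ solSet V X f, ∀ b ∈ solSet V X f, dev X f a = dev X f b :=
    fun a ha b hb => le_antisymm (ha.2 b hb.1) (hb.2 a ha.1)
  intro q hq p hp
  constructor
  · refine ⟨V.sub_mem hp.1 hq.1, ?_⟩
    intro x hx y hy
    have h1 := abs_le.mp (hbound q hq.1 x hx.1)
    have h2 := abs_le.mp (hbound q hq.1 y hy.1)
    have hde : dev X f q = dev X f p := hdev_eq q hq p hp
    rw [hde] at h1 h2
    have hxE : f x - p x = dev X f p := hx.2
    have hyE : p y - f y = dev X f p := hy.2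
    have ha : (p - q) x ≤ 0 := by simp only [Pi.sub_apply]; linarith [h1.2]
    have hb : 0 ≤ (p - q) y := by simp only [Pi.sub_apply]; linarith [h2.1]
    exact mul_nonpos_of_nonpos_of_nonneg ha hb
  · obtain ⟨t, ht, hrQ⟩ := exists_forward hq₀ hp
    set r : (Fin n → ℝ) → ℝ := q₀ + t • (q₀ - p) with hrdef
    have e1 : dev X f q₀ = dev X f p := hdev_eq _ hq0Q _ hp
    have e2 : dev X f r = dev X f p := hdev_eq _ hrQ _ hp
    have hPsub : Pset X f q₀ ⊆ Pset X f p := by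
      rintro x ⟨hxX, hxE⟩
      refine ⟨hxX, ?_⟩
      have b1 := abs_le.mp (hbound p hp.1 x hxX)
      have b2 := abs_le.mp (hbound r hrQ.1 x hxX)
      rw [e2] at b2
      have hd : f x - q₀ x = dev X f p := by rw [hxE, e1]
      have key : (1 + t) * (f x - q₀ x) = t * (f x - p x) + (f x - r x) := by
        simp only [hrdef, Pi.add_apply, Pi.smul_apply, Pi.sub_apply, smul_eq_mul]
        ring
      rw [hd] at key
      have h4 : t * (dev X f p - (f x - p x)) ≤ 0 := by nlinarith [key, b2.2]
      have h5 : dev X f p - (f x - p x) ≤ 0 := by nlinarith [h4, ht]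
      linarith [b1.2]
    have hNsub : Nset X f q₀ ⊆ Nset X f p := by
      rintro y ⟨hyX, hyE⟩
      refine ⟨hyX, ?_⟩
      have b1 := abs_le.mp (hbound p hp.1 y hyX)
      have b2 := abs_le.mp (hbound r hrQ.1 y hyX)
      rw [e2] at b2
      have hd : q₀ y - f y = dev X f p := by rw [hyE, e1]
      have key : (1 + t) * (q₀ y - f y) = t * (p y - f y) + (r y - f y) := by
        simp only [hrdef, Pi.add_apply, Pi.smul_apply, Pi.sub_apply, smul_eq_mul]
        ring
      rw [hd] at key
      have h4 : t * (dev X f p - (p y - f y)) ≤ 0 := by nlinarith [key, b2.1]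
      have h5 : dev X f p - (p y - f y) ≤ 0 := by nlinarith [h4, ht]
      linarith [b1.1]
    intro s hs
    exact ⟨hs.1, fun x hx y hy => hs.2 x (hPsub hx) y (hNsub hy)⟩
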